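/- Let e : ℝ → ℝ be a twice continuously differentiable function and γ > 0. Define Ψ(t) = 2γ e(t) + γ² ∫₀ᵗ e(ρ)dρ + e'(t). If Ψ(t) → 0 as t → ∞ and Ψ is bounded, then e(t) → 0 and e'(t) → 0 as t → ∞. -/

import Mathlib

open Filter MeasureTheory

private lemma decay_aux {γ : ℝ} (hγ : 0 < γ) {h : ℝ → ℝ} (hc : Continuous h)
    (hl : Tendsto h atTop (nhds 0)) :
    Tendsto (fun t => Real.exp (-(γ * t)) * ∫ s in (0:ℝ)..t, Real.exp (γ * s) * h s)
      atTop (nhds 0) := by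
  have hic : Continuous fun s => Real.exp (γ * s) * h s :=
    (Real.continuous_exp.comp (continuous_const.mul continuous_id)).mul hc
  rw [Metric.tendsto_atTop] at hl ⊢
  intro ε hε
  obtain ⟨T, hT⟩ := hl (ε * γ / 4) (by positivity)
  set T' : ℝ := max T 0 with hT'def
  set C0 : ℝ := |∫ s in (0:ℝ)..T', Real.exp (γ * s) * h s| with hC0def
  have hC0 : 0 ≤ C0 := abs_nonneg _
  -- choose N so that exp(-(γ t)) * C0 < ε/2 for t ≥ N
  have htend : Tendsto (fun t : ℝ => Real.exp (-(γ * t)) * C0) atTop (nhds 0) := by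
    have h1 : Tendsto (fun t : ℝ => Real.exp (-(γ * t))) atTop (nhds 0) :=
      Real.tendsto_exp_neg_atTop_nhds_zero.comp (tendsto_id.const_mul_atTop hγ)
    simpa using h1.mul_const C0
  rw [Metric.tendsto_atTop] at htend
  obtain ⟨N, hN⟩ := htend (ε / 2) (by positivity)
  refine ⟨max N T', fun t ht => ?_⟩
  have htT' : T' ≤ t := le_trans (le_max_right _ _) ht
  have htN : N ≤ t := le_trans (le_max_left _ _) ht
  -- split the integral
  have hsplit : (∫ s in (0:ℝ)..t, Real.exp (γ * s) * h s)
      = (∫ s in (0:ℝ)..T', Real.exp (γ * s) * h s)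
        + ∫ s in T'..t, Real.exp (γ * s) * h s := by
    rw [intervalIntegral.integral_add_adjacent_intervals
      (hic.intervalIntegrable _ _) (hic.intervalIntegrable _ _)]
  -- bound the tail integral
  have hbound : |∫ s in T'..t, Real.exp (γ * s) * h s|
      ≤ (ε * γ / 4) * (γ⁻¹ * (Real.exp (γ * t) - Real.exp (γ * T'))) := by
    have hmono : (∫ s in T'..t, |Real.exp (γ * s) * h s|)
        ≤ ∫ s in T'..t, Real.exp (γ * s) * (ε * γ / 4) := by
      apply intervalIntegral.integral_mono_on htT'
      · exact (hic.abs).intervalIntegrable _ _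
      · exact (((Real.continuous_exp.comp (continuous_const.mul continuous_id)).mul
          continuous_const)).intervalIntegrable _ _
      · intro s hs
        rw [abs_mul, abs_of_pos (Real.exp_pos _)]
        have hsT : T ≤ s := le_trans (le_max_left _ _) hs.1
        have := hT s hsT
        rw [Real.dist_eq, sub_zero] at this
        exact mul_le_mul_of_nonneg_left this.le (Real.exp_pos _).le
    have hcalc : (∫ s in T'..t, Real.exp (γ * s)) = γ⁻¹ * (Real.exp (γ * t) - Real.exp (γ * T')) := by
      have hd : ∀ s ∈ Set.uIcc T' t, HasDerivAt (fun u => γ⁻¹ * Real.exp (γ * u))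
          (Real.exp (γ * s)) s := by
        intro s _
        have := ((Real.hasDerivAt_exp (γ * s)).comp s
          ((hasDerivAt_id s).const_mul γ)).const_mul γ⁻¹
        simpa [mul_comm, mul_assoc, inv_mul_cancel_left₀ hγ.ne'] using this
      have := intervalIntegral.integral_eq_sub_of_hasDerivAt hd
        ((Real.continuous_exp.comp (continuous_const.mul continuous_id)).intervalIntegrable _ _)
      rw [this]; ring
    calc |∫ s in T'..t, Real.exp (γ * s) * h s|
        ≤ ∫ s in T'..t, |Real.exp (γ * s) * h s| :=
          intervalIntegral.abs_integral_le_integral_abs htT'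
      _ ≤ ∫ s in T'..t, Real.exp (γ * s) * (ε * γ / 4) := hmono
      _ = (ε * γ / 4) * (γ⁻¹ * (Real.exp (γ * t) - Real.exp (γ * T'))) := by
          rw [intervalIntegral.integral_mul_const, hcalc]; ring
  have hexp : (0:ℝ) < Real.exp (-(γ * t)) := Real.exp_pos _
  rw [Real.dist_eq, sub_zero, abs_mul, abs_of_pos hexp, hsplit]
  calc Real.exp (-(γ * t)) * |(∫ s in (0:ℝ)..T', Real.exp (γ * s) * h s)
          + ∫ s in T'..t, Real.exp (γ * s) * h s|
      ≤ Real.exp (-(γ * t)) * (C0 + |∫ s in T'..t, Real.exp (γ * s) * h s|) := by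
        apply mul_le_mul_of_nonneg_left _ hexp.le
        exact abs_add_le _ _
    _ ≤ Real.exp (-(γ * t)) * C0
        + Real.exp (-(γ * t)) * ((ε * γ / 4) * (γ⁻¹ * (Real.exp (γ * t) - Real.exp (γ * T')))) := by
        rw [mul_add]
        exact add_le_add le_rfl (mul_le_mul_of_nonneg_left hbound hexp.le)
    _ < ε / 2 + ε / 2 := by
        apply add_lt_add_of_lt_of_le
        · have := hN t htN
          rw [Real.dist_eq, sub_zero] at this
          calc Real.exp (-(γ * t)) * C0 ≤ |Real.exp (-(γ * t)) * C0| := le_abs_self _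
            _ < ε / 2 := this
        · have h1 : γ⁻¹ * (Real.exp (γ * t) - Real.exp (γ * T')) ≤ γ⁻¹ * Real.exp (γ * t) := by
            apply mul_le_mul_of_nonneg_left _ (inv_pos.mpr hγ).le
            linarith [(Real.exp_pos (γ * T')).le]
          calc Real.exp (-(γ * t)) * ((ε * γ / 4) * (γ⁻¹ * (Real.exp (γ * t) - Real.exp (γ * T'))))
              ≤ Real.exp (-(γ * t)) * ((ε * γ / 4) * (γ⁻¹ * Real.exp (γ * t))) := by
                apply mul_le_mul_of_nonneg_left _ hexp.le
                exact mul_le_mul_of_nonneg_left h1 (by positivity)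
            _ = ε / 4 := by
                rw [Real.exp_neg]
                field_simp
            _ ≤ ε / 2 := by linarith
    _ = ε := by ring

private lemma tendsto_of_deriv_add {γ : ℝ} (hγ : 0 < γ) {f : ℝ → ℝ}
    (hf : Differentiable ℝ f) (hf' : Continuous (deriv f))
    (hl : Tendsto (fun t => deriv f t + γ * f t) atTop (nhds 0)) :
    Tendsto f atTop (nhds 0) := by
  set h : ℝ → ℝ := fun t => deriv f t + γ * f t with hhdef
  have hhc : Continuous h := hf'.add (continuous_const.mul hf.continuous)
  have key : ∀ t, f t = Real.exp (-(γ * t)) * f 0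
      + Real.exp (-(γ * t)) * ∫ s in (0:ℝ)..t, Real.exp (γ * s) * h s := by
    intro t
    have hg : ∀ s, HasDerivAt (fun u => Real.exp (γ * u) * f u) (Real.exp (γ * s) * h s) s := by
      intro s
      have h1 : HasDerivAt (fun u => Real.exp (γ * u)) (Real.exp (γ * s) * γ) s :=
        (Real.hasDerivAt_exp (γ * s)).comp s ((hasDerivAt_id s).const_mul γ) |>.congr_deriv
          (by ring)
      have h2 : HasDerivAt f (deriv f s) s := (hf s).hasDerivAt
      have := h1.fun_mul h2
      refine this.congr_deriv ?_
      simp only [hhdef]; ring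
    have hint : (∫ s in (0:ℝ)..t, Real.exp (γ * s) * h s)
        = Real.exp (γ * t) * f t - Real.exp (γ * 0) * f 0 := by
      apply intervalIntegral.integral_eq_sub_of_hasDerivAt (fun s _ => hg s)
      exact ((Real.continuous_exp.comp (continuous_const.mul continuous_id)).mul hhc).intervalIntegrable _ _
    rw [hint]
    have he1 : Real.exp (-(γ * t)) * Real.exp (γ * t) = 1 := by
      rw [← Real.exp_add]; simp
    simp only [mul_zero, Real.exp_zero, one_mul, mul_sub, ← mul_assoc, he1]
    ring
  have h1 : Tendsto (fun t : ℝ => Real.exp (-(γ * t)) * f 0) atTop (nhds 0) := by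
    have := (Real.tendsto_exp_neg_atTop_nhds_zero.comp (tendsto_id.const_mul_atTop hγ)).mul_const (f 0)
    simpa using this
  have h2 := decay_aux hγ hhc hl
  have := h1.add h2
  rw [add_zero] at this
  exact this.congr fun t => (key t).symm

/-- Lemma 1: if `Ψ(t) = 2γe(t) + γ²∫₀ᵗe + e'(t)` tends to `0` at infinity and is
bounded, then `e(t) → 0` and `e'(t) → 0` as `t → ∞`. -/
theorem stmt3 (e Ψ : ℝ → ℝ) (γ : ℝ) (hγ : 0 < γ) (he : ContDiff ℝ 2 e)
    (hΨ : ∀ t, Ψ t = 2 * γ * e t + γ ^ 2 * (∫ ρ in (0:ℝ)..t, e ρ) + deriv e t)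
    (hlim : Tendsto Ψ atTop (nhds 0)) (hbd : ∃ B, ∀ t, |Ψ t| ≤ B) :
    Tendsto e atTop (nhds 0) ∧ Tendsto (deriv e) atTop (nhds 0) := by
  have hec : Continuous e := he.continuous
  have hed : Differentiable ℝ e := he.differentiable two_ne_zero
  have hec' : Continuous (deriv e) := he.continuous_deriv one_le_two
  set E : ℝ → ℝ := fun t => ∫ ρ in (0:ℝ)..t, e ρ with hEdef
  have hEd : ∀ t, HasDerivAt E (e t) t := fun t =>
    (hec.integral_hasStrictDerivAt 0 t).hasDerivAt
  have hEdiff : Differentiable ℝ E := fun t => (hEd t).differentiableAt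
  have hderivE : deriv E = e := funext fun t => (hEd t).deriv
  set v : ℝ → ℝ := fun t => e t + γ * E t with hvdef
  have hvd : ∀ t, HasDerivAt v (deriv e t + γ * e t) t := fun t =>
    ((hed t).hasDerivAt).add ((hEd t).const_mul γ)
  have hvdiff : Differentiable ℝ v := fun t => (hvd t).differentiableAt
  have hderivv : deriv v = fun t => deriv e t + γ * e t := funext fun t => (hvd t).deriv
  have hvc' : Continuous (deriv v) := by
    rw [hderivv]; exact hec'.add (continuous_const.mul hec)
  -- v' + γ v = Ψ
  have hveq : (fun t => deriv v t + γ * v t) = Ψ := by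
    funext t
    rw [hderivv, hΨ t]
    simp only [hvdef]
    ring
  have hvlim : Tendsto v atTop (nhds 0) :=
    tendsto_of_deriv_add hγ hvdiff hvc' (hveq ▸ hlim)
  -- E' + γ E = v → 0
  have hElim : Tendsto E atTop (nhds 0) := by
    apply tendsto_of_deriv_add hγ hEdiff (hderivE ▸ hec)
    have : (fun t => deriv E t + γ * E t) = v := by
      funext t; rw [hderivE]
    rw [this]; exact hvlim
  have helim : Tendsto e atTop (nhds 0) := by
    have h2 := hvlim.sub (hElim.const_mul γ)
    have h3 : (0:ℝ) - γ * 0 = 0 := by ring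
    rw [h3] at h2
    exact h2.congr fun t => by simp only [hvdef, hEdef]; ring
  refine ⟨helim, ?_⟩
  have : Tendsto (fun t => Ψ t - 2 * γ * e t - γ ^ 2 * E t) atTop (nhds 0) := by
    have := (hlim.sub ((helim.const_mul (2 * γ)))).sub (hElim.const_mul (γ ^ 2))
    simpa using this
  exact this.congr fun t => by rw [hΨ t]; ring
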